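/- Let 𝒜 ∈ ℝ^{d₁×⋯×dₙ} be a tensor with multilinear rank (r₁,…,rₙ). Let I_i ⊆ [d_i], and set ℛ = 𝒜(I₁,…,Iₙ), C_i = 𝒜_(i)(:, ⊗_{j≠i} I_j), and U_i = C_i(I_i,:). Then the following are equivalent: (i) rank(U_i) = r_i for all i; (ii) 𝒜 = ℛ ×₁ (C₁U₁†) ×₂ ⋯ ×ₙ (CₙUₙ†); (iii) the multilinear rank of ℛ is (r₁,…,rₙ); (iv) rank(𝒜_(i)(I_i,:)) = r_i for all i = 1,…,n. Moreover, if any of these equivalent statements holds, then 𝒜 = 𝒜 ×₁ (C₁C₁†) ×₂ ⋯ ×ₙ (CₙCₙ†). -/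

import Mathlib

open scoped BigOperators
open Matrix

noncomputable section

namespace TCUR

/-- Euclidean norm of a finite real vector. -/
def enorm {ι : Type*} [Fintype ι] (x : ι → ℝ) : ℝ :=
  Real.sqrt (∑ i, x i ^ 2)

/-- Frobenius norm of a real matrix. -/
def frob {m n : Type*} [Fintype m] [Fintype n] (A : Matrix m n ℝ) : ℝ :=
  Real.sqrt (∑ i, ∑ j, A i j ^ 2)

/-- Spectral norm of a real matrix. -/
def spec {m n : Type*} [Fintype m] [Fintype n] (A : Matrix m n ℝ) : ℝ :=
  sSup ((fun x => enorm (A.mulVec x)) '' {x : n → ℝ | enorm x ≤ 1})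

/-- The four Penrose conditions: `B` is the Moore–Penrose pseudoinverse of `A`. -/
def IsMP {m n : Type*} [Fintype m] [Fintype n] (A : Matrix m n ℝ) (B : Matrix n m ℝ) : Prop :=
  A * B * A = A ∧ B * A * B = B ∧ (A * B)ᵀ = A * B ∧ (B * A)ᵀ = B * A

open Classical in
/-- Moore–Penrose pseudoinverse of a real matrix (def body). -/
def pinv {m n : Type*} [Fintype m] [Fintype n] (A : Matrix m n ℝ) : Matrix n m ℝ :=
  if h : ∃ B, IsMP A B then h.choose else 0

/-- `sval k A` is the `k`-th largest singular value of `A`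
(via the Eckart–Young characterization). -/
def sval {m n : Type*} [Fintype m] [Fintype n] (k : ℕ) (A : Matrix m n ℝ) : ℝ :=
  sInf ((fun B => spec (A - B)) '' {B : Matrix m n ℝ | B.rank < k})

/-- `IsBestRank r A Ar`: `Ar` is a best rank-`r` (Frobenius) approximation of `A`,
 e.g. a rank-`r` truncated SVD of `A`. -/
def IsBestRank {m n : Type*} [Fintype m] [Fintype n] (r : ℕ) (A Ar : Matrix m n ℝ) : Prop :=
  Ar.rank ≤ r ∧ ∀ B : Matrix m n ℝ, B.rank ≤ r → frob (A - Ar) ≤ frob (A - B)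

/-- Compact SVD data: `A = W * S * Vᵀ` with `W, V` having orthonormal columns and
`S` diagonal with positive diagonal entries. -/
def CompactSVD {m n : Type*} [Fintype m] [Fintype n] {r : ℕ} (A : Matrix m n ℝ)
    (W : Matrix m (Fin r) ℝ) (S : Matrix (Fin r) (Fin r) ℝ) (V : Matrix n (Fin r) ℝ) : Prop :=
  A = W * S * Vᵀ ∧ Wᵀ * W = 1 ∧ Vᵀ * V = 1 ∧ (∀ i j, i ≠ j → S i j = 0) ∧ ∀ i, 0 < S i i

/-- Coherence `μ(W) = (d/r) max_i ‖W(i,:)‖₂²` of a matrix with orthonormal columns. -/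
def coh {m r : Type*} [Fintype m] [Fintype r] (W : Matrix m r ℝ) : ℝ :=
  ((Fintype.card m : ℝ) / (Fintype.card r : ℝ)) * ⨆ i : m, ∑ j, W i j ^ 2

/-- Row submatrix with rows restricted to `I`. -/
def rowsub {m k : Type*} (M : Matrix m k ℝ) (I : Finset m) : Matrix {x // x ∈ I} k ℝ :=
  M.submatrix Subtype.val id

/-- Probability, with respect to the uniform distribution on the finite sample space
`{ω : Ω | cond ω}`, of the event `{ω | event ω}`. -/
def uniformProb {Ω : Type*} [Fintype Ω] (cond event : Ω → Prop) : ℝ :=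
  (Nat.card {ω : Ω // cond ω ∧ event ω} : ℝ) / (Nat.card {ω : Ω // cond ω} : ℝ)

variable {n : ℕ}

/-- Mode-`k` unfolding of an `n`-mode tensor: the matrix whose columns are the
mode-`k` fibers of the tensor. -/
def unfold {ι : Fin n → Type*} (A : ((i : Fin n) → ι i) → ℝ) (k : Fin n) :
    Matrix (ι k) ((j : {j : Fin n // j ≠ k}) → ι j.1) ℝ :=
  fun x y => A fun i => if h : i = k then cast (congrArg ι h.symm) x else y ⟨i, h⟩

/-- Tucker (all-modes) product `T ×₁ M 1 ×₂ ⋯ ×ₙ M n`. -/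
def tucker {ι κ : Fin n → Type*} [∀ i, Fintype (κ i)]
    (T : ((i : Fin n) → κ i) → ℝ) (M : (i : Fin n) → Matrix (ι i) (κ i) ℝ) :
    ((i : Fin n) → ι i) → ℝ :=
  fun x => ∑ y : (i : Fin n) → κ i, (∏ i, M i (x i) (y i)) * T y

/-- The subtensor with mode-`i` indices restricted to `I i`. -/
def subT {ι : Fin n → Type*} (A : ((i : Fin n) → ι i) → ℝ)
    (I : (i : Fin n) → Finset (ι i)) : ((i : Fin n) → {x // x ∈ I i}) → ℝ :=
  fun x => A fun i => (x i).1

/-- Frobenius norm of a tensor. -/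
def tfrob {ι : Fin n → Type*} [∀ i, Fintype (ι i)] (A : ((i : Fin n) → ι i) → ℝ) : ℝ :=
  Real.sqrt (∑ x : (i : Fin n) → ι i, A x ^ 2)

/-- `Cmat A J i = 𝒜_(i)(:,J_i)`: the mode-`i` unfolding restricted to the columns `J i`. -/
def Cmat {ι : Fin n → Type*} (A : ((i : Fin n) → ι i) → ℝ)
    (J : (i : Fin n) → Finset ((j : {j : Fin n // j ≠ i}) → ι j.1)) (i : Fin n) :
    Matrix (ι i) {y // y ∈ J i} ℝ :=
  (unfold A i).submatrix id Subtype.val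

/-- `Umat A I J i = 𝒜_(i)(I_i,J_i)`. -/
def Umat {ι : Fin n → Type*} (A : ((i : Fin n) → ι i) → ℝ)
    (I : (i : Fin n) → Finset (ι i))
    (J : (i : Fin n) → Finset ((j : {j : Fin n // j ≠ i}) → ι j.1)) (i : Fin n) :
    Matrix {x // x ∈ I i} {y // y ∈ J i} ℝ :=
  (unfold A i).submatrix Subtype.val Subtype.val

/-- The Chidori column index set `⊗_{j ≠ i} I j`. -/
def chidoriJ {ι : Fin n → Type*} (I : (i : Fin n) → Finset (ι i)) (i : Fin n) :
    Finset ((j : {j : Fin n // j ≠ i}) → ι j.1) :=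
  Fintype.piFinset fun j => I j.1

/-- `σ_max(𝒜) = max_j σ₁(𝒜_(j))`. -/
def tsmax {ι : Fin n → Type*} [∀ i, Fintype (ι i)] (A : ((i : Fin n) → ι i) → ℝ) : ℝ :=
  ⨆ j, sval 1 (unfold A j)

/-- `σ_min(𝒜) = min_j σ_{r_j}(𝒜_(j))`. -/
def tsmin {ι : Fin n → Type*} [∀ i, Fintype (ι i)] (A : ((i : Fin n) → ι i) → ℝ)
    (r : Fin n → ℕ) : ℝ :=
  ⨅ j, sval (r j) (unfold A j)



set_option linter.unusedSectionVars false

section AuxTensor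

section MP
variable {m k : Type*} [Fintype m] [Fintype k]

lemma conjT_eq_transpose {a b : Type*} (M : Matrix a b ℝ) : Mᴴ = Mᵀ :=
  Matrix.ext fun _ _ => star_trivial _

lemma exists_isMP (A : Matrix m k ℝ) : ∃ B, IsMP A B := by
  classical
  set S : Matrix k k ℝ := Aᵀ * A with hSdef
  have hSh : S.IsHermitian := by
    rw [hSdef, ← conjT_eq_transpose]; exact Matrix.isHermitian_conjTranspose_mul_self A
  set U : Matrix k k ℝ := (hSh.eigenvectorUnitary : Matrix k k ℝ) with hU
  set μ : k → ℝ := hSh.eigenvalues with hμ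
  have hspec : S = U * diagonal μ * Uᵀ := by
    have := hSh.spectral_theorem
    rwa [RCLike.ofReal_real_eq_id, Function.id_comp, Unitary.conjStarAlgAut_apply, star_eq_conjTranspose,
      conjT_eq_transpose] at this
  have hUU : Uᵀ * U = 1 := by
    rw [← conjT_eq_transpose, ← star_eq_conjTranspose]
    exact Unitary.coe_star_mul_self hSh.eigenvectorUnitary
  set Sp : Matrix k k ℝ := U * diagonal (fun i => (μ i)⁻¹) * Uᵀ with hSp
  have key : ∀ a b : k → ℝ, (U * diagonal a * Uᵀ) * (U * diagonal b * Uᵀ)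
      = U * diagonal (fun i => a i * b i) * Uᵀ := by
    intro a b
    calc (U * diagonal a * Uᵀ) * (U * diagonal b * Uᵀ)
        = U * diagonal a * (Uᵀ * U) * (diagonal b * Uᵀ) := by
          simp only [Matrix.mul_assoc]
      _ = U * diagonal (fun i => a i * b i) * Uᵀ := by
          rw [hUU, Matrix.mul_one, Matrix.mul_assoc, ← Matrix.mul_assoc (diagonal a),
            diagonal_mul_diagonal, Matrix.mul_assoc]
  have hcomm : (fun i => μ i * (μ i)⁻¹) = fun i => (μ i)⁻¹ * μ i :=
    funext fun i => mul_comm _ _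
  have hSpS : Sp * S = U * diagonal (fun i => (μ i)⁻¹ * μ i) * Uᵀ := by
    rw [hSp, hspec, key]
  have hSSp : S * Sp = U * diagonal (fun i => (μ i)⁻¹ * μ i) * Uᵀ := by
    rw [hSp, hspec, key, hcomm]
  have hd1 : (fun i => (μ i)⁻¹ * μ i * (μ i)⁻¹) = fun i => (μ i)⁻¹ := by
    funext i
    rcases eq_or_ne (μ i) 0 with h | h
    · simp [h]
    · field_simp
  have hd2 : (fun i => μ i * ((μ i)⁻¹ * μ i)) = μ := by
    funext i
    rcases eq_or_ne (μ i) 0 with h | h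
    · simp [h]
    · field_simp
  have hSpSS : Sp * S * Sp = Sp := by
    rw [hSpS, hSp, key, hd1]
  have hSSpS : S * (Sp * S) = S := by
    rw [hSpS, hspec, key, hd2]
  have cancel : ∀ (X Y : Matrix k k ℝ),
      S * X = S * Y → A * X = A * Y := by
    intro X Y h
    have h0 : (Aᴴ * A) * (X - Y) = 0 := by
      rw [conjT_eq_transpose, ← hSdef, Matrix.mul_sub, h, sub_self]
    have := (conjTranspose_mul_self_mul_eq_zero A (X - Y)).mp h0
    rw [Matrix.mul_sub, sub_eq_zero] at this
    exact this
  -- B := Sp * Aᵀ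
  refine ⟨Sp * Aᵀ, ?_, ?_, ?_, ?_⟩
  · -- A * (Sp * Aᵀ) * A = A
    have h1 : A * (Sp * Aᵀ) * A = A * (Sp * S) := by
      rw [hSdef]; simp only [Matrix.mul_assoc]
    have h2 : S * (Sp * S) = S * 1 := by rw [Matrix.mul_one, hSSpS]
    have h3 := cancel (Sp * S) 1 h2
    rw [Matrix.mul_one] at h3
    rw [h1, h3]
  · -- (Sp * Aᵀ) * A * (Sp * Aᵀ) = Sp * Aᵀ
    calc (Sp * Aᵀ) * A * (Sp * Aᵀ) = (Sp * S * Sp) * Aᵀ := by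
          rw [hSdef]; simp only [Matrix.mul_assoc]
      _ = Sp * Aᵀ := by rw [hSpSS]
  · -- (A * (Sp * Aᵀ))ᵀ = A * (Sp * Aᵀ)
    have hSpT : Spᵀ = Sp := by
      rw [hSp, Matrix.transpose_mul, Matrix.transpose_mul, transpose_transpose,
        diagonal_transpose, Matrix.mul_assoc]
    rw [Matrix.transpose_mul, Matrix.transpose_mul, transpose_transpose, hSpT,
      Matrix.mul_assoc]
  · -- ((Sp * Aᵀ) * A)ᵀ = (Sp * Aᵀ) * A
    have h3 : (Sp * Aᵀ) * A = Sp * S := by rw [hSdef, Matrix.mul_assoc]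
    have h4 : (Sp * S)ᵀ = S * Sp := by
      rw [Matrix.transpose_mul]
      have hST : Sᵀ = S := by
        rw [← conjT_eq_transpose]; exact hSh
      have hSpT : Spᵀ = Sp := by
        rw [hSp, Matrix.transpose_mul, Matrix.transpose_mul, transpose_transpose,
          diagonal_transpose, Matrix.mul_assoc]
      rw [hST, hSpT]
    rw [h3, h4, hSpS, hSSp]

lemma pinv_isMP (A : Matrix m k ℝ) : IsMP A (pinv A) := by
  rw [pinv, dif_pos (exists_isMP A)]
  exact (exists_isMP A).choose_spec

lemma mul_pinv_mul (A : Matrix m k ℝ) : A * pinv A * A = A := (pinv_isMP A).1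

lemma rank_pinv_le (A : Matrix m k ℝ) : (pinv A).rank ≤ A.rank := by
  conv_lhs => rw [← (pinv_isMP A).2.1]
  exact le_trans (Matrix.rank_mul_le_left _ _) (Matrix.rank_mul_le_right _ _)

end MP


section RankSpan
variable {m k m' k' : Type*} [Fintype m] [Fintype k] [Fintype m'] [Fintype k']

lemma range_mul_le (M : Matrix m k ℝ) (W : Matrix k k' ℝ) :
    LinearMap.range (M * W).mulVecLin ≤ LinearMap.range M.mulVecLin := by
  rw [Matrix.mulVecLin_mul]
  exact LinearMap.range_comp_le_range _ _

lemma exists_right_factor {N : Matrix m k' ℝ} {M : Matrix m k ℝ}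
    (h : LinearMap.range N.mulVecLin ≤ LinearMap.range M.mulVecLin) :
    ∃ W : Matrix k k' ℝ, N = M * W := by
  classical
  have hc : ∀ j : k', ∃ w : k → ℝ, M.mulVec w = N.mulVec (Pi.single j 1) :=
    fun j => h ⟨Pi.single j 1, rfl⟩
  refine ⟨Matrix.of fun i j => (hc j).choose i, ?_⟩
  ext i j
  have := congrFun ((hc j).choose_spec) i
  simp only [Matrix.mulVec, dotProduct, Pi.single_apply, mul_ite, mul_one,
    mul_zero, Finset.sum_ite_eq', Finset.mem_univ, if_true] at this
  rw [Matrix.mul_apply, ← this]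
  rfl

lemma colsub_eq_mul [DecidableEq k] (M : Matrix m k ℝ) (g : k' → k) :
    M.submatrix id g = M * (1 : Matrix k k ℝ).submatrix id g := by
  classical
  ext i j
  simp [Matrix.mul_apply, Matrix.one_apply]

lemma rowsub_eq_mul [DecidableEq m] (M : Matrix m k ℝ) (f : m' → m) :
    M.submatrix f id = (1 : Matrix m m ℝ).submatrix f id * M := by
  classical
  ext i j
  simp [Matrix.mul_apply, Matrix.one_apply]

lemma rank_submatrix_le' (M : Matrix m k ℝ) (f : m' → m) (g : k' → k) :
    (M.submatrix f g).rank ≤ M.rank := by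
  classical
  have h : M.submatrix f g = (1 : Matrix m m ℝ).submatrix f id * (M * (1 : Matrix k k ℝ).submatrix id g) := by
    ext i j
    simp [Matrix.mul_apply, Matrix.one_apply]
  rw [h]
  exact le_trans (Matrix.rank_mul_le_right _ _) (Matrix.rank_mul_le_left _ _)

lemma rank_submatrix_equiv (M : Matrix m k ℝ) (e₁ : m' ≃ m) (e₂ : k' ≃ k) :
    (M.submatrix e₁ e₂).rank = M.rank := by
  refine le_antisymm (rank_submatrix_le' M e₁ e₂) ?_
  have : M = (M.submatrix e₁ e₂).submatrix e₁.symm e₂.symm := by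
    ext i j; simp
  conv_lhs => rw [this]
  exact rank_submatrix_le' _ _ _

lemma exists_right_factor_of_rank (M : Matrix m k ℝ) (g : k' → k)
    (h : (M.submatrix id g).rank = M.rank) :
    ∃ W : Matrix k' k ℝ, M = (M.submatrix id g) * W := by
  classical
  have hle : LinearMap.range (M.submatrix id g).mulVecLin ≤ LinearMap.range M.mulVecLin := by
    rw [colsub_eq_mul M g]; exact range_mul_le _ _
  have heq : LinearMap.range (M.submatrix id g).mulVecLin = LinearMap.range M.mulVecLin :=
    Submodule.eq_of_le_of_finrank_le hle (le_of_eq h.symm)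
  exact exists_right_factor (le_of_eq heq.symm)

lemma exists_left_factor_of_rank (M : Matrix m k ℝ) (f : m' → m)
    (h : (M.submatrix f id).rank = M.rank) :
    ∃ Z : Matrix m m' ℝ, M = Z * (M.submatrix f id) := by
  have hT : (Mᵀ.submatrix id f).rank = Mᵀ.rank := by
    have : Mᵀ.submatrix id f = (M.submatrix f id)ᵀ := by ext i j; rfl
    rw [this, Matrix.rank_transpose, Matrix.rank_transpose, h]
  obtain ⟨W, hW⟩ := exists_right_factor_of_rank Mᵀ f hT
  refine ⟨Wᵀ, ?_⟩
  have h1 := congrArg Matrix.transpose hW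
  rw [Matrix.transpose_transpose, Matrix.transpose_mul] at h1
  have h2 : (Mᵀ.submatrix id f)ᵀ = M.submatrix f id := by ext i j; rfl
  rw [← h2]
  exact h1

end RankSpan


section CUR
variable {m k m' k' : Type*} [Fintype m] [Fintype k] [Fintype m'] [Fintype k']

lemma mat_cur (M : Matrix m k ℝ) (f : m' → m) (g : k' → k)
    (h : (M.submatrix f g).rank = M.rank) :
    M = (M.submatrix id g) * pinv (M.submatrix f g) * (M.submatrix f id) := by
  set U := M.submatrix f g with hU
  set R := M.submatrix f id with hR
  have hUR : U = R.submatrix id g := by ext i j; rfl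
  have hRle : R.rank ≤ M.rank := rank_submatrix_le' M f id
  have hUle : U.rank ≤ R.rank := by rw [hUR]; exact rank_submatrix_le' R id g
  have hRrank : R.rank = M.rank := le_antisymm hRle (h ▸ hUle)
  obtain ⟨Z, hZ⟩ := exists_left_factor_of_rank M f hRrank
  have hUrankR : (R.submatrix id g).rank = R.rank := by rw [← hUR, h, hRrank]
  obtain ⟨W, hW⟩ := exists_right_factor_of_rank R g hUrankR
  rw [← hUR] at hW
  have hC : M.submatrix id g = Z * U := by
    rw [hUR]
    have : M.submatrix id g = (Z * R).submatrix id g := by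
      conv_lhs => rw [hZ]
    rw [this]
    ext i j
    simp [Matrix.mul_apply]
  symm
  calc M.submatrix id g * pinv U * R
      = Z * U * pinv U * (U * W) := by rw [hC, ← hW]
    _ = Z * (U * pinv U * U) * W := by simp only [Matrix.mul_assoc]
    _ = Z * (U * W) := by rw [mul_pinv_mul, Matrix.mul_assoc]
    _ = Z * R := by rw [hW]
    _ = M := hZ.symm

end CUR

def combine {ι : Fin n → Type*} (k : Fin n) (a : ι k)
    (z : (j : {j : Fin n // j ≠ k}) → ι j.1) : (i : Fin n) → ι i :=
  fun i => if h : i = k then cast (congrArg ι h.symm) a else z ⟨i, h⟩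

lemma unfold_apply {ι : Fin n → Type*} (A : ((i : Fin n) → ι i) → ℝ) (k : Fin n)
    (a : ι k) (z : (j : {j : Fin n // j ≠ k}) → ι j.1) :
    unfold A k a z = A (combine k a z) := rfl

lemma combine_apply_self {ι : Fin n → Type*} (k : Fin n) (a : ι k)
    (z : (j : {j : Fin n // j ≠ k}) → ι j.1) : combine k a z k = a := by
  simp [combine]

lemma combine_apply_ne {ι : Fin n → Type*} (k : Fin n) (a : ι k)
    (z : (j : {j : Fin n // j ≠ k}) → ι j.1) {i : Fin n} (h : i ≠ k) :
    combine k a z i = z ⟨i, h⟩ := by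
  simp [combine, h]

lemma combine_proj {ι : Fin n → Type*} (k : Fin n) (a : ι k) (x : (i : Fin n) → ι i) :
    combine k a (fun j => x j.1) = Function.update x k a := by
  funext i
  by_cases h : i = k
  · subst h
    rw [combine_apply_self, Function.update_self]
  · rw [combine_apply_ne _ _ _ h, Function.update_of_ne h]

lemma A_eq_unfold {ι : Fin n → Type*} (A : ((i : Fin n) → ι i) → ℝ) (k : Fin n)
    (x : (i : Fin n) → ι i) : A x = unfold A k (x k) (fun j => x j.1) := by
  rw [unfold_apply, combine_proj, Function.update_eq_self]

lemma slice_of_matrix {ι : Fin n → Type*} [∀ i, Fintype (ι i)] {κ : Type*} [Fintype κ]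
    (A : ((i : Fin n) → ι i) → ℝ) (k : Fin n) (e : κ → ι k) (Z : Matrix (ι k) κ ℝ)
    (h : unfold A k = Z * (unfold A k).submatrix e id) (x : (i : Fin n) → ι i) :
    A x = ∑ b : κ, Z (x k) b * A (Function.update x k (e b)) := by
  have h1 := congrFun (congrFun h (x k)) (fun j => x j.1)
  calc A x = unfold A k (x k) (fun j => x j.1) := A_eq_unfold A k x
    _ = ∑ b : κ, Z (x k) b * (unfold A k).submatrix e id b (fun j => x j.1) := by
        rw [h1, Matrix.mul_apply]
    _ = ∑ b : κ, Z (x k) b * A (Function.update x k (e b)) := by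
        refine Finset.sum_congr rfl fun b _ => ?_
        rw [Matrix.submatrix_apply, id_eq, unfold_apply, combine_proj]

universe u v

lemma iterate_slices : ∀ (N : ℕ) {ι : Fin N → Type u} {κ : Fin N → Type v}
    [∀ i, Fintype (ι i)] [∀ i, Fintype (κ i)]
    (A : ((i : Fin N) → ι i) → ℝ) (e : (i : Fin N) → κ i → ι i)
    (M : (i : Fin N) → Matrix (ι i) (κ i) ℝ),
    (∀ (k : Fin N) (x), A x = ∑ b : κ k, M k (x k) b * A (Function.update x k (e k b))) →
    ∀ (x : (i : Fin N) → ι i),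
    A x = ∑ y : (i : Fin N) → κ i, (∏ i, M i (x i) (y i)) * A (fun i => e i (y i)) := by
  intro N
  induction N with
  | zero =>
    intro ι κ _ _ A e M _ x
    haveI : Unique ((i : Fin 0) → κ i) :=
      ⟨⟨fun i => i.elim0⟩, fun _ => funext fun i => i.elim0⟩
    rw [Fintype.sum_unique]
    have h1 : A (fun i => e i ((default : (i : Fin 0) → κ i) i)) = A x :=
      congrArg A (Subsingleton.elim _ _)
    simp [h1]
  | succ N IH =>
    intro ι κ _ _ A e M h x
    -- the parametrized tail tensors
    set T : ι 0 → ((i : Fin N) → ι i.succ) → ℝ := fun a z => A (Fin.cons a z) with hT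
    have hslice : ∀ (a : ι 0) (k : Fin N) (z : (i : Fin N) → ι i.succ),
        T a z = ∑ c : κ k.succ, M k.succ (z k) c * T a (Function.update z k (e k.succ c)) := by
      intro a k z
      have := h k.succ (Fin.cons a z)
      rw [Fin.cons_succ] at this
      calc T a z = A (Fin.cons a z) := rfl
        _ = ∑ c : κ k.succ, M k.succ (z k) c *
              A (Function.update (Fin.cons a z) k.succ (e k.succ c)) := this
        _ = _ := by
            refine Finset.sum_congr rfl fun c _ => ?_
            rw [← Fin.cons_update]
    have hIH : ∀ (a : ι 0) (z : (i : Fin N) → ι i.succ),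
        T a z = ∑ y : (i : Fin N) → κ i.succ,
          (∏ i, M i.succ (z i) (y i)) * T a (fun i => e i.succ (y i)) := fun a z =>
      IH (T a) (fun i => e i.succ) (fun i => M i.succ) (hslice a) z
    have h0 := h 0 x
    have hupd : ∀ c : ι 0, A (Function.update x 0 c) = T c (Fin.tail x) := by
      intro c
      have : Function.update x 0 c = Fin.cons c (Fin.tail x) := by
        funext i
        refine Fin.cases ?_ (fun i => ?_) i
        · rw [Function.update_self, Fin.cons_zero]
        · rw [Function.update_of_ne (Fin.succ_ne_zero i), Fin.cons_succ, Fin.tail]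
      rw [this]
    rw [h0]
    have hrhs : ∀ (b : κ 0) (y' : (i : Fin N) → κ i.succ),
        (∏ i, M i (x i) (Fin.cons b y' i)) * A (fun i => e i (Fin.cons b y' i)) =
        M 0 (x 0) b * ((∏ i, M i.succ (x i.succ) (y' i)) * T (e 0 b) (fun i => e i.succ (y' i))) := by
      intro b y'
      have hp : (∏ i, M i (x i) (Fin.cons b y' i)) =
          M 0 (x 0) b * ∏ i, M i.succ (x i.succ) (y' i) := by
        rw [Fin.prod_univ_succ]
        simp [Fin.cons_succ, Fin.cons_zero]
      have ha : A (fun i => e i (Fin.cons b y' i)) = T (e 0 b) (fun i => e i.succ (y' i)) := by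
        have : (fun i => e i (Fin.cons b y' i)) =
            Fin.cons (e 0 b) (fun i => e i.succ (y' i)) := by
          funext i
          refine Fin.cases ?_ (fun i => ?_) i
          · rw [Fin.cons_zero, Fin.cons_zero]
          · rw [Fin.cons_succ, Fin.cons_succ]
        rw [this]
      rw [hp, ha, mul_assoc]
    calc ∑ b : κ 0, M 0 (x 0) b * A (Function.update x 0 (e 0 b))
        = ∑ b : κ 0, M 0 (x 0) b * ∑ y' : (i : Fin N) → κ i.succ,
            (∏ i, M i.succ (x i.succ) (y' i)) * T (e 0 b) (fun i => e i.succ (y' i)) := by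
          refine Finset.sum_congr rfl fun b _ => ?_
          rw [hupd (e 0 b), hIH]
          rfl
      _ = ∑ p : κ 0 × ((i : Fin N) → κ i.succ),
            (∏ i, M i (x i) (Fin.cons p.1 p.2 i)) * A (fun i => e i (Fin.cons p.1 p.2 i)) := by
          rw [Fintype.sum_prod_type]
          refine Finset.sum_congr rfl fun b _ => ?_
          rw [Finset.mul_sum]
          exact Finset.sum_congr rfl fun y' _ => (hrhs b y').symm
      _ = ∑ y : (i : Fin (N + 1)) → κ i,
            (∏ i, M i (x i) (y i)) * A (fun i => e i (y i)) := by
          exact Fintype.sum_equiv (Fin.consEquiv κ) _ _ fun p => rfl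

lemma unfold_factor {ι κ : Fin n → Type*} [∀ i, Fintype (ι i)] [∀ i, Fintype (κ i)]
    (A : ((i : Fin n) → ι i) → ℝ) (T : ((i : Fin n) → κ i) → ℝ)
    (M : (i : Fin n) → Matrix (ι i) (κ i) ℝ)
    (h : ∀ x, A x = ∑ y : (i : Fin n) → κ i, (∏ i, M i (x i) (y i)) * T y) (j : Fin n) :
    unfold A j = M j * (Matrix.of fun (b : κ j) (z : (k : {k : Fin n // k ≠ j}) → ι k.1) =>
      ∑ y' : (k : {k : Fin n // k ≠ j}) → κ k.1,
        (∏ k : {k : Fin n // k ≠ j}, M k.1 (z k) (y' k)) *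
          T ((Equiv.piSplitAt j κ).symm (b, y'))) := by
  ext a z
  rw [unfold_apply, h (combine j a z), Matrix.mul_apply]
  rw [← Equiv.sum_comp (Equiv.piSplitAt j κ).symm
    (fun y => (∏ i, M i (combine j a z i) (y i)) * T y), Fintype.sum_prod_type]
  refine Finset.sum_congr rfl fun b _ => ?_
  rw [Matrix.of_apply, Finset.mul_sum]
  refine Finset.sum_congr rfl fun y' _ => ?_
  have hsplit : ∀ i : Fin n, (Equiv.piSplitAt j κ).symm (b, y') i =
      combine j b y' i := by
    intro i
    by_cases hi : i = j
    · subst hi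
      rw [combine_apply_self, Equiv.piSplitAt_symm_apply]
      exact dif_pos rfl
    · rw [Equiv.piSplitAt_symm_apply, dif_neg hi, combine_apply_ne _ _ _ hi]
  have hprod : (∏ i, M i (combine j a z i) ((Equiv.piSplitAt j κ).symm (b, y') i)) =
      M j a b * ∏ k : {k : Fin n // k ≠ j}, M k.1 (z k) (y' k) := by
    rw [← Finset.mul_prod_erase Finset.univ _ (Finset.mem_univ j)]
    congr 1
    · rw [hsplit j, combine_apply_self, combine_apply_self]
    · rw [Finset.prod_subtype (p := fun k => k ≠ j) (Finset.univ.erase j)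
        (fun k => by simp [Finset.mem_erase, Ne])
        (fun k => M k (combine j a z k) ((Equiv.piSplitAt j κ).symm (b, y') k))]
      refine Finset.prod_congr rfl fun k _ => ?_
      rw [hsplit k.1, combine_apply_ne _ _ _ k.2, combine_apply_ne _ _ _ k.2]
  rw [hprod, mul_assoc]


variable {n : ℕ}

/-- The reindexing equivalence between unrestricted pi-type columns and Chidori columns. -/
def chidoriEquiv {d : Fin n → ℕ} (I : (i : Fin n) → Finset (Fin (d i))) (j : Fin n) :
    ((k : {k : Fin n // k ≠ j}) → {v // v ∈ I k.1}) ≃ {y // y ∈ chidoriJ I j} where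
  toFun y' := ⟨fun k => (y' k).1, by
    simp only [chidoriJ, Fintype.mem_piFinset]
    exact fun k => (y' k).2⟩
  invFun w := fun k => ⟨w.1 k, by
    have := w.2
    simp only [chidoriJ, Fintype.mem_piFinset] at this
    exact this k⟩
  left_inv y' := funext fun k => Subtype.ext rfl
  right_inv w := Subtype.ext (funext fun k => rfl)

lemma unfold_subT_eq {d : Fin n → ℕ} (A : ((i : Fin n) → Fin (d i)) → ℝ)
    (I : (i : Fin n) → Finset (Fin (d i))) (j : Fin n) :
    unfold (subT A I) j =
      (Umat A I (chidoriJ I) j).submatrix (Equiv.refl _) (chidoriEquiv I j) := by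
  ext x z
  show subT A I (combine j x z) = unfold A j x.1 (fun k => ((z k)).1)
  rw [unfold_apply]
  show A _ = A _
  congr 1
  funext i
  by_cases h : i = j
  · subst h
    rw [combine_apply_self (ι := fun l => {x // x ∈ I l}) i x z,
      combine_apply_self (ι := fun l => Fin (d l)) i x.1 (fun k => ((z k)).1)]
  · rw [combine_apply_ne (ι := fun l => {x // x ∈ I l}) j x z h,
      combine_apply_ne (ι := fun l => Fin (d l)) j x.1 (fun k => ((z k)).1) h]

lemma rank_unfold_subT {d : Fin n → ℕ} (A : ((i : Fin n) → Fin (d i)) → ℝ)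
    (I : (i : Fin n) → Finset (Fin (d i))) (j : Fin n) :
    (unfold (subT A I) j).rank = (Umat A I (chidoriJ I) j).rank := by
  rw [unfold_subT_eq A I j]
  exact rank_submatrix_equiv _ (Equiv.refl _) (chidoriEquiv I j)


end AuxTensor

/-- **Chidori CUR characterization** (Theorem `cor: CUR Char1`), with
`Jᵢ = ⊗_{j≠i} Iⱼ`: equivalence of
(i) `rank Uᵢ = rᵢ` for all `i`;
(ii) `A = ℛ ×₁ (C₁U₁†) ×₂ ⋯ ×ₙ (CₙUₙ†)`;
(iii) the multilinear rank of `ℛ` is `(r₁,…,rₙ)`;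
(iv) `rank (A_(i)(Iᵢ,:)) = rᵢ` for all `i`;
and moreover any of these implies `A = A ×₁ (C₁C₁†) ×₂ ⋯ ×ₙ (CₙCₙ†)`. -/
theorem chidori_cur_characterization {n : ℕ} {d : Fin n → ℕ}
    (A : ((i : Fin n) → Fin (d i)) → ℝ) (r : Fin n → ℕ)
    (hrank : ∀ i, (unfold A i).rank = r i)
    (I : (i : Fin n) → Finset (Fin (d i))) :
    (((∀ i, (Umat A I (chidoriJ I) i).rank = r i) ↔
        A = tucker (subT A I) fun i =>
          Cmat A (chidoriJ I) i * pinv (Umat A I (chidoriJ I) i)) ∧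
      ((A = tucker (subT A I) fun i =>
          Cmat A (chidoriJ I) i * pinv (Umat A I (chidoriJ I) i)) ↔
        (∀ i, (unfold (subT A I) i).rank = r i)) ∧
      ((∀ i, (unfold (subT A I) i).rank = r i) ↔
        (∀ i, (rowsub (unfold A i) (I i)).rank = r i))) ∧
    ((∀ i, (Umat A I (chidoriJ I) i).rank = r i) →
      A = tucker A fun i => Cmat A (chidoriJ I) i * pinv (Cmat A (chidoriJ I) i)) := by
  classical
  -- basic rank inequalities
  have hUleR : ∀ j, (Umat A I (chidoriJ I) j).rank ≤ (rowsub (unfold A j) (I j)).rank :=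
    fun j => rank_submatrix_le' (rowsub (unfold A j) (I j)) id Subtype.val
  have hRle : ∀ j, (rowsub (unfold A j) (I j)).rank ≤ r j :=
    fun j => (hrank j) ▸ rank_submatrix_le' (unfold A j) Subtype.val id
  have hUle : ∀ j, (Umat A I (chidoriJ I) j).rank ≤ r j :=
    fun j => le_trans (hUleR j) (hRle j)
  have hCle : ∀ j, (Cmat A (chidoriJ I) j).rank ≤ r j :=
    fun j => (hrank j) ▸ rank_submatrix_le' (unfold A j) id Subtype.val
  have hUleC : ∀ j, (Umat A I (chidoriJ I) j).rank ≤ (Cmat A (chidoriJ I) j).rank :=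
    fun j => rank_submatrix_le' (Cmat A (chidoriJ I) j) Subtype.val id
  -- (i) → (ii)
  have hQ2 : (∀ i, (Umat A I (chidoriJ I) i).rank = r i) →
      A = tucker (subT A I) fun i =>
        Cmat A (chidoriJ I) i * pinv (Umat A I (chidoriJ I) i) := by
    intro hQ
    have hcur : ∀ k, unfold A k =
        (Cmat A (chidoriJ I) k * pinv (Umat A I (chidoriJ I) k)) *
          (unfold A k).submatrix (Subtype.val : {v // v ∈ I k} → Fin (d k)) id := by
      intro k
      have hr : ((unfold A k).submatrix (Subtype.val : {v // v ∈ I k} → Fin (d k))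
          (Subtype.val : {y // y ∈ chidoriJ I k} → _)).rank = (unfold A k).rank := by
        rw [hrank k]
        exact hQ k
      have := mat_cur (unfold A k) (Subtype.val : {v // v ∈ I k} → Fin (d k))
        (Subtype.val : {y // y ∈ chidoriJ I k} → _) hr
      exact this
    have hslice : ∀ (k : Fin n) (x), A x = ∑ b : {v // v ∈ I k},
        (Cmat A (chidoriJ I) k * pinv (Umat A I (chidoriJ I) k)) (x k) b *
          A (Function.update x k b.1) :=
      fun k => slice_of_matrix A k Subtype.val _ (hcur k)
    funext x
    exact iterate_slices n A (fun i => Subtype.val)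
      (fun i => Cmat A (chidoriJ I) i * pinv (Umat A I (chidoriJ I) i)) hslice x
  -- (ii) → (i)
  have h2Q : (A = tucker (subT A I) fun i =>
        Cmat A (chidoriJ I) i * pinv (Umat A I (chidoriJ I) i)) →
      ∀ i, (Umat A I (chidoriJ I) i).rank = r i := by
    intro h2 j
    have htuck : ∀ x, A x = ∑ y : (i : Fin n) → {v // v ∈ I i},
        (∏ i, (Cmat A (chidoriJ I) i * pinv (Umat A I (chidoriJ I) i)) (x i) (y i)) *
          subT A I y := fun x => congrFun h2 x
    obtain hfac := unfold_factor A (subT A I)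
      (fun i => Cmat A (chidoriJ I) i * pinv (Umat A I (chidoriJ I) i)) htuck j
    have h1 : r j ≤ (Umat A I (chidoriJ I) j).rank := by
      calc r j = (unfold A j).rank := (hrank j).symm
        _ ≤ (Cmat A (chidoriJ I) j * pinv (Umat A I (chidoriJ I) j)).rank := by
            rw [hfac]; exact Matrix.rank_mul_le_left _ _
        _ ≤ (pinv (Umat A I (chidoriJ I) j)).rank := Matrix.rank_mul_le_right _ _
        _ ≤ (Umat A I (chidoriJ I) j).rank := rank_pinv_le _
    exact le_antisymm (hUle j) h1
  -- (iv) → (i)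
  have h4Q : (∀ i, (rowsub (unfold A i) (I i)).rank = r i) →
      ∀ i, (Umat A I (chidoriJ I) i).rank = r i := by
    intro h4 j
    have hws : ∀ k, ∃ Z : Matrix (Fin (d k)) {v // v ∈ I k} ℝ, unfold A k =
        Z * (unfold A k).submatrix (Subtype.val : {v // v ∈ I k} → Fin (d k)) id := by
      intro k
      refine exists_left_factor_of_rank (unfold A k) Subtype.val ?_
      show (rowsub (unfold A k) (I k)).rank = (unfold A k).rank
      rw [h4 k, hrank k]
    choose Z hZ using hws
    have hslice : ∀ (k : Fin n) (x), A x = ∑ b : {v // v ∈ I k},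
        Z k (x k) b * A (Function.update x k b.1) :=
      fun k => slice_of_matrix A k Subtype.val (Z k) (hZ k)
    have hiter : ∀ x, A x = ∑ y : (i : Fin n) → {v // v ∈ I i},
        (∏ i, Z i (x i) (y i)) * A (fun i => (y i).1) :=
      iterate_slices n A (fun i => Subtype.val) Z hslice
    obtain hfac := unfold_factor A (fun y => A (fun i => (y i).1)) Z hiter j
    -- the G matrix factors through the unfolding of the core
    set G : Matrix {v // v ∈ I j} ((k : {k : Fin n // k ≠ j}) → Fin (d k.1)) ℝ :=
      Matrix.of fun b z =>
        ∑ y' : (k : {k : Fin n // k ≠ j}) → {v // v ∈ I k.1},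
          (∏ k : {k : Fin n // k ≠ j}, Z k.1 (z k) (y' k)) *
            A (fun i => ((Equiv.piSplitAt j fun i => {v // v ∈ I i}).symm (b, y') i).1)
      with hG
    have hGfac : G = unfold (subT A I) j *
        Matrix.of (fun (y' : (k : {k : Fin n // k ≠ j}) → {v // v ∈ I k.1})
          (z : (k : {k : Fin n // k ≠ j}) → Fin (d k.1)) =>
            ∏ k : {k : Fin n // k ≠ j}, Z k.1 (z k) (y' k)) := by
      ext b z
      rw [Matrix.mul_apply]
      refine Finset.sum_congr rfl fun y' _ => ?_
      refine (mul_comm _ _).trans ?_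
      congr 1
      rw [unfold_apply]
      show A _ = A _
      congr 1
      funext i
      by_cases h : i = j
      · subst h
        have h1 : (Equiv.piSplitAt i fun l => {v // v ∈ I l}).symm (b, y') i = b := by
          rw [Equiv.piSplitAt_symm_apply]; exact dif_pos rfl
        rw [h1, combine_apply_self (ι := fun l => {v // v ∈ I l}) i b y']
      · have h1 : (Equiv.piSplitAt j fun l => {v // v ∈ I l}).symm (b, y') i = y' ⟨i, h⟩ := by
          rw [Equiv.piSplitAt_symm_apply]; exact dif_neg h
        rw [h1, combine_apply_ne (ι := fun l => {v // v ∈ I l}) j b y' h]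
    have h1 : r j ≤ (Umat A I (chidoriJ I) j).rank := by
      calc r j = (unfold A j).rank := (hrank j).symm
        _ ≤ G.rank := by rw [hfac]; exact Matrix.rank_mul_le_right _ _
        _ ≤ (unfold (subT A I) j).rank := by rw [hGfac]; exact Matrix.rank_mul_le_left _ _
        _ = (Umat A I (chidoriJ I) j).rank := rank_unfold_subT A I j
    exact le_antisymm (hUle j) h1
  -- (i) → (iv)
  have hQ4 : (∀ i, (Umat A I (chidoriJ I) i).rank = r i) →
      ∀ i, (rowsub (unfold A i) (I i)).rank = r i := by
    intro hQ j
    exact le_antisymm (hRle j) ((hQ j) ▸ hUleR j)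
  -- (i) ↔ (iii)
  have hQ3 : (∀ i, (Umat A I (chidoriJ I) i).rank = r i) ↔
      ∀ i, (unfold (subT A I) i).rank = r i := by
    constructor
    · intro hQ j; rw [rank_unfold_subT A I j]; exact hQ j
    · intro h3 j; rw [← rank_unfold_subT A I j]; exact h3 j
  -- moreover
  have hQ6 : (∀ i, (Umat A I (chidoriJ I) i).rank = r i) →
      A = tucker A fun i => Cmat A (chidoriJ I) i * pinv (Cmat A (chidoriJ I) i) := by
    intro hQ
    have hproj : ∀ k, unfold A k =
        (Cmat A (chidoriJ I) k * pinv (Cmat A (chidoriJ I) k)) *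
          (unfold A k).submatrix (id : Fin (d k) → Fin (d k)) id := by
      intro k
      have hCrank : (Cmat A (chidoriJ I) k).rank = (unfold A k).rank := by
        refine le_antisymm (rank_submatrix_le' (unfold A k) id Subtype.val) ?_
        rw [hrank k, ← hQ k]
        exact hUleC k
      have hle : LinearMap.range (Cmat A (chidoriJ I) k).mulVecLin ≤
          LinearMap.range (unfold A k).mulVecLin := by
        rw [show Cmat A (chidoriJ I) k = (unfold A k).submatrix id Subtype.val from rfl,
          colsub_eq_mul (unfold A k) Subtype.val]
        exact range_mul_le _ _
      have heq : LinearMap.range (Cmat A (chidoriJ I) k).mulVecLin =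
          LinearMap.range (unfold A k).mulVecLin :=
        Submodule.eq_of_le_of_finrank_le hle (le_of_eq hCrank.symm)
      obtain ⟨W, hW⟩ := exists_right_factor (le_of_eq heq.symm)
      rw [Matrix.submatrix_id_id]
      calc unfold A k = Cmat A (chidoriJ I) k * W := hW
        _ = (Cmat A (chidoriJ I) k * pinv (Cmat A (chidoriJ I) k) *
              Cmat A (chidoriJ I) k) * W := by rw [mul_pinv_mul]
        _ = Cmat A (chidoriJ I) k * pinv (Cmat A (chidoriJ I) k) *
              (Cmat A (chidoriJ I) k * W) := by rw [Matrix.mul_assoc]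
        _ = _ := by rw [← hW]
    have hslice : ∀ (k : Fin n) (x), A x = ∑ b : Fin (d k),
        (Cmat A (chidoriJ I) k * pinv (Cmat A (chidoriJ I) k)) (x k) b *
          A (Function.update x k b) :=
      fun k => slice_of_matrix A k id _ (hproj k)
    funext x
    exact iterate_slices n A (fun i => id)
      (fun i => Cmat A (chidoriJ I) i * pinv (Cmat A (chidoriJ I) i)) hslice x
  refine ⟨⟨⟨hQ2, h2Q⟩, ?_, ?_⟩, hQ6⟩
  · exact ⟨fun h2 => hQ3.mp (h2Q h2), fun h3 => hQ2 (hQ3.mpr h3)⟩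
  · exact ⟨fun h3 => hQ4 (hQ3.mpr h3), fun h4 => hQ3.mp (h4Q h4)⟩


end TCUR
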